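/- Let K ≥ 1, let s, c : Fin K → ℝ be arbitrary, let λ ∈ ℝ, and let x*, x : Fin K → ℝ satisfy (s k − λ) * (x* k) = −(c k) for every k and ∑ k, (x k)^2 = ∑ k, (x* k)^2. Then F(x) − F(x*) = (1/2) ∑ k, (s k − λ) * (x k − x* k)^2, where F(x) = (1/2) ∑ k, s k * (x k)^2 + ∑ k, c k * x k. -/

import Mathlib

/-- Difference of SCQP objective values at two points of equal norm, when `x*`
satisfies the first-order stationarity condition `(diag s - λ I) x* + c = 0`:
`F(x) - F(x*) = (1/2) ∑ k, (s k - λ) (x k - x* k)^2`, where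
`F(x) = (1/2) ∑ k, s k (x k)^2 + ∑ k, c k * x k`. -/
theorem scqp_objective_difference (K : ℕ) (hK : 1 ≤ K)
    (s c : Fin K → ℝ) (lam : ℝ) (xstar x : Fin K → ℝ)
    (hstat : ∀ k, (s k - lam) * xstar k = -(c k))
    (hnorm : ∑ k, (x k) ^ 2 = ∑ k, (xstar k) ^ 2) :
    ((1 / 2 : ℝ) * ∑ k, s k * (x k) ^ 2 + ∑ k, c k * x k)
        - ((1 / 2 : ℝ) * ∑ k, s k * (xstar k) ^ 2 + ∑ k, c k * xstar k)
      = (1 / 2 : ℝ) * ∑ k, (s k - lam) * (x k - xstar k) ^ 2 := by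
  have h1 : ((∑ k, s k * (x k) ^ 2) + 2 * ∑ k, c k * x k)
      - ((∑ k, s k * (xstar k) ^ 2) + 2 * ∑ k, c k * xstar k)
      = (∑ k, (s k - lam) * (x k - xstar k) ^ 2)
        + lam * ((∑ k, (x k) ^ 2) - ∑ k, (xstar k) ^ 2) := by
    rw [Finset.mul_sum, Finset.mul_sum, show ((∑ k, (x k)^2) - ∑ k, (xstar k)^2) = ∑ k, ((x k)^2 - (xstar k)^2) from (Finset.sum_sub_distrib _ _).symm, Finset.mul_sum,
      ← Finset.sum_add_distrib, ← Finset.sum_add_distrib, ← Finset.sum_sub_distrib,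
      ← Finset.sum_add_distrib]
    exact Finset.sum_congr rfl fun k _ => by
      linear_combination (2 * (x k - xstar k)) * hstat k
  rw [hnorm, sub_self, mul_zero, add_zero] at h1
  linarith
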